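/- Fix real parameters m₁, m₂, r₁, r₂, g > 0. Let X₃ = [X₁, X₂] and X₄ = [X₂, X₃]. Then for every z = (θ₁, θ₂, ω₁, ω₂) ∈ ℝ⁴, the first two components of X₄(z) vanish: (X₄(z))₁ = (X₄(z))₂ = 0. -/

import Mathlib

noncomputable section

/-- `Δ(θ) = r₁ r₂ (m₁ + m₂ sin²(θ₁ − θ₂))`. -/
def Δpend (m₁ m₂ r₁ r₂ : ℝ) (z : Fin 4 → ℝ) : ℝ :=
  r₁ * r₂ * (m₁ + m₂ * Real.sin (z 0 - z 1) ^ 2)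

def b₁pend (m₁ m₂ r₁ r₂ : ℝ) (z : Fin 4 → ℝ) : ℝ :=
  m₂ * r₂ * (r₁ * m₂ * Real.cos (z 0 - z 1) - r₂ * m₁)

def b₂pend (m₁ m₂ r₁ r₂ : ℝ) (z : Fin 4 → ℝ) : ℝ :=
  m₂ * r₁ * (r₂ * m₁ * Real.cos (z 0 - z 1) - r₁ * (m₁ + m₂))

def a₁pend (m₁ m₂ r₁ r₂ g : ℝ) (z : Fin 4 → ℝ) : ℝ :=
  -g * r₂ * (m₂ * Real.sin (z 1) * Real.cos (z 0 - z 1)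
      - (m₁ + m₂) * Real.sin (z 0))
  - m₂ * r₂ * Real.sin (z 0 - z 1) *
      (r₁ * Real.cos (z 0 - z 1) * (z 2) ^ 2 + r₂ * (z 3) ^ 2)

def a₂pend (m₁ m₂ r₁ r₂ g : ℝ) (z : Fin 4 → ℝ) : ℝ :=
  -g * r₁ * (m₁ + m₂) * (Real.cos (z 0 - z 1) * Real.sin (z 0) - Real.sin (z 1))
  + r₁ * Real.sin (z 0 - z 1) *
      (r₁ * (m₁ + m₂) * (z 2) ^ 2 + r₂ * m₂ * Real.cos (z 0 - z 1) * (z 3) ^ 2)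

/-- The drift-type vector field `X₁(z) = (Δ(θ) ω₁, Δ(θ) ω₂, a₁(z), a₂(z))`. -/
def X₁pend (m₁ m₂ r₁ r₂ g : ℝ) : (Fin 4 → ℝ) → (Fin 4 → ℝ) :=
  fun z => ![Δpend m₁ m₂ r₁ r₂ z * z 2, Δpend m₁ m₂ r₁ r₂ z * z 3,
    a₁pend m₁ m₂ r₁ r₂ g z, a₂pend m₁ m₂ r₁ r₂ g z]

/-- The control-type vector field `X₂(z) = (0, 0, b₁(θ), b₂(θ))`. -/
def X₂pend (m₁ m₂ r₁ r₂ : ℝ) : (Fin 4 → ℝ) → (Fin 4 → ℝ) :=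
  fun z => ![0, 0, b₁pend m₁ m₂ r₁ r₂ z, b₂pend m₁ m₂ r₁ r₂ z]

/-- The Lie bracket `[X, Y](z) = DY(z)·X(z) − DX(z)·Y(z)` of vector fields. -/
def lieBracket (X Y : (Fin 4 → ℝ) → (Fin 4 → ℝ)) : (Fin 4 → ℝ) → (Fin 4 → ℝ) :=
  fun z => fderiv ℝ Y z (X z) - fderiv ℝ X z (Y z)

/-- `X₃ = [X₁, X₂]`. -/
def X₃pend (m₁ m₂ r₁ r₂ g : ℝ) : (Fin 4 → ℝ) → (Fin 4 → ℝ) :=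
  lieBracket (X₁pend m₁ m₂ r₁ r₂ g) (X₂pend m₁ m₂ r₁ r₂)

/-- `X₄ = [X₂, X₃]`. -/
def X₄pend (m₁ m₂ r₁ r₂ g : ℝ) : (Fin 4 → ℝ) → (Fin 4 → ℝ) :=
  lieBracket (X₂pend m₁ m₂ r₁ r₂) (X₃pend m₁ m₂ r₁ r₂ g)

/-- The family `F = {X₁, X₂, X₃, X₄}`. -/
def Fpend (m₁ m₂ r₁ r₂ g : ℝ) : Set ((Fin 4 → ℝ) → (Fin 4 → ℝ)) :=
  {X₁pend m₁ m₂ r₁ r₂ g, X₂pend m₁ m₂ r₁ r₂,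
   X₃pend m₁ m₂ r₁ r₂ g, X₄pend m₁ m₂ r₁ r₂ g}

/-- Iterated Lie brackets `[Y₁,[…[Y_{k−1}, Y_k]…]]` of members of `F`
(including the members of `F` themselves). -/
inductive IterBracket (F : Set ((Fin 4 → ℝ) → (Fin 4 → ℝ))) :
    ((Fin 4 → ℝ) → (Fin 4 → ℝ)) → Prop
  | base {X} : X ∈ F → IterBracket F X
  | bracket {X Y} : X ∈ F → IterBracket F Y → IterBracket F (lieBracket X Y)

/-- `F` is bracket-generating on `ℝ⁴`. -/
def BracketGenerating (F : Set ((Fin 4 → ℝ) → (Fin 4 → ℝ))) : Prop :=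
  ∀ z : Fin 4 → ℝ,
    Submodule.span ℝ {v : Fin 4 → ℝ | ∃ B, IterBracket F B ∧ v = B z} = ⊤

end


section Aux

open ContinuousLinearMap

private lemma proj_fderiv_apply (f : (Fin 4 → ℝ) → (Fin 4 → ℝ)) (z v : Fin 4 → ℝ)
    (hf : DifferentiableAt ℝ f z) (i : Fin 4) :
    fderiv ℝ f z v i = fderiv ℝ (fun z => f z i) z v := by
  have h := (hasFDerivAt_pi'.1 hf.hasFDerivAt i)
  rw [h.fderiv]; rfl

private lemma key_fderiv (h : ℝ → ℝ) (hh : Differentiable ℝ h) (z v : Fin 4 → ℝ)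
    (hv0 : v 0 = 0) (hv1 : v 1 = 0) :
    fderiv ℝ (fun z : Fin 4 → ℝ => h (z 0 - z 1)) z v = 0 := by
  have hsub : HasFDerivAt (fun z : Fin 4 → ℝ => z 0 - z 1)
      ((proj 0 : (Fin 4 → ℝ) →L[ℝ] ℝ) - proj 1) z :=
    ((proj 0 : (Fin 4 → ℝ) →L[ℝ] ℝ).hasFDerivAt).sub
      ((proj 1 : (Fin 4 → ℝ) →L[ℝ] ℝ).hasFDerivAt)
  have H : HasFDerivAt (fun z : Fin 4 → ℝ => h (z 0 - z 1))
      (deriv h (z 0 - z 1) • ((proj 0 : (Fin 4 → ℝ) →L[ℝ] ℝ) - proj 1)) z :=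
    (hh (z 0 - z 1)).hasDerivAt.comp_hasFDerivAt z hsub
  rw [H.fderiv]
  simp [hv0, hv1]

private lemma fderiv_Dmul (c : ℝ → ℝ) (hc : Differentiable ℝ c) (j : Fin 4) (z v : Fin 4 → ℝ)
    (hv0 : v 0 = 0) (hv1 : v 1 = 0) :
    fderiv ℝ (fun z : Fin 4 → ℝ => c (z 0 - z 1) * z j) z v = c (z 0 - z 1) * v j := by
  have hsub : HasFDerivAt (fun z : Fin 4 → ℝ => z 0 - z 1)
      ((proj 0 : (Fin 4 → ℝ) →L[ℝ] ℝ) - proj 1) z :=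
    ((proj 0 : (Fin 4 → ℝ) →L[ℝ] ℝ).hasFDerivAt).sub
      ((proj 1 : (Fin 4 → ℝ) →L[ℝ] ℝ).hasFDerivAt)
  have hC : HasFDerivAt (fun z : Fin 4 → ℝ => c (z 0 - z 1))
      (deriv c (z 0 - z 1) • ((proj 0 : (Fin 4 → ℝ) →L[ℝ] ℝ) - proj 1)) z :=
    (hc (z 0 - z 1)).hasDerivAt.comp_hasFDerivAt z hsub
  have hj : HasFDerivAt (fun z : Fin 4 → ℝ => z j) (proj j : (Fin 4 → ℝ) →L[ℝ] ℝ) z :=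
    (proj j : (Fin 4 → ℝ) →L[ℝ] ℝ).hasFDerivAt
  have H := hC.mul hj
  rw [show (fun z : Fin 4 → ℝ => c (z 0 - z 1) * z j) =
      ((fun z : Fin 4 → ℝ => c (z 0 - z 1)) * fun z : Fin 4 → ℝ => z j) from rfl, H.fderiv]
  simp [hv0, hv1]

private lemma X₂_diff (m₁ m₂ r₁ r₂ : ℝ) (z : Fin 4 → ℝ) :
    DifferentiableAt ℝ (X₂pend m₁ m₂ r₁ r₂) z := by
  rw [differentiableAt_pi]
  intro i
  fin_cases i <;> simp [X₂pend, b₁pend, b₂pend] <;> fun_prop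

private lemma X₁_diff (m₁ m₂ r₁ r₂ g : ℝ) (z : Fin 4 → ℝ) :
    DifferentiableAt ℝ (X₁pend m₁ m₂ r₁ r₂ g) z := by
  rw [differentiableAt_pi]
  intro i
  fin_cases i <;> simp [X₁pend, Δpend, a₁pend, a₂pend] <;> fun_prop

private lemma fderiv_X₂_zero (m₁ m₂ r₁ r₂ : ℝ) (z v : Fin 4 → ℝ) :
    fderiv ℝ (X₂pend m₁ m₂ r₁ r₂) z v 0 = 0 ∧
      fderiv ℝ (X₂pend m₁ m₂ r₁ r₂) z v 1 = 0 := by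
  have hd := X₂_diff m₁ m₂ r₁ r₂ z
  constructor
  · rw [proj_fderiv_apply _ _ _ hd 0,
      show (fun z => X₂pend m₁ m₂ r₁ r₂ z 0) = (fun _ : Fin 4 → ℝ => (0 : ℝ)) from
        funext fun z => by simp [X₂pend]]
    simp
  · rw [proj_fderiv_apply _ _ _ hd 1,
      show (fun z => X₂pend m₁ m₂ r₁ r₂ z 1) = (fun _ : Fin 4 → ℝ => (0 : ℝ)) from
        funext fun z => by simp [X₂pend]]
    simp

private lemma X₃_comp (m₁ m₂ r₁ r₂ g : ℝ) (z : Fin 4 → ℝ) :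
    X₃pend m₁ m₂ r₁ r₂ g z 0 = -(Δpend m₁ m₂ r₁ r₂ z * b₁pend m₁ m₂ r₁ r₂ z) ∧
      X₃pend m₁ m₂ r₁ r₂ g z 1 = -(Δpend m₁ m₂ r₁ r₂ z * b₂pend m₁ m₂ r₁ r₂ z) := by
  have hX₁ := X₁_diff m₁ m₂ r₁ r₂ g z
  have h2 := fderiv_X₂_zero m₁ m₂ r₁ r₂ z (X₁pend m₁ m₂ r₁ r₂ g z)
  have hv0 : X₂pend m₁ m₂ r₁ r₂ z 0 = 0 := by simp [X₂pend]
  have hv1 : X₂pend m₁ m₂ r₁ r₂ z 1 = 0 := by simp [X₂pend]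
  have hX20 : X₃pend m₁ m₂ r₁ r₂ g z 0 =
      fderiv ℝ (X₂pend m₁ m₂ r₁ r₂) z (X₁pend m₁ m₂ r₁ r₂ g z) 0
        - fderiv ℝ (X₁pend m₁ m₂ r₁ r₂ g) z (X₂pend m₁ m₂ r₁ r₂ z) 0 := rfl
  have hX21 : X₃pend m₁ m₂ r₁ r₂ g z 1 =
      fderiv ℝ (X₂pend m₁ m₂ r₁ r₂) z (X₁pend m₁ m₂ r₁ r₂ g z) 1
        - fderiv ℝ (X₁pend m₁ m₂ r₁ r₂ g) z (X₂pend m₁ m₂ r₁ r₂ z) 1 := rfl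
  have hB0 : fderiv ℝ (fun z : Fin 4 → ℝ => Δpend m₁ m₂ r₁ r₂ z * z 2) z
      (X₂pend m₁ m₂ r₁ r₂ z) = Δpend m₁ m₂ r₁ r₂ z * X₂pend m₁ m₂ r₁ r₂ z 2 :=
    fderiv_Dmul (fun t => r₁ * r₂ * (m₁ + m₂ * Real.sin t ^ 2)) (by fun_prop) 2 z _ hv0 hv1
  have hB1 : fderiv ℝ (fun z : Fin 4 → ℝ => Δpend m₁ m₂ r₁ r₂ z * z 3) z
      (X₂pend m₁ m₂ r₁ r₂ z) = Δpend m₁ m₂ r₁ r₂ z * X₂pend m₁ m₂ r₁ r₂ z 3 :=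
    fderiv_Dmul (fun t => r₁ * r₂ * (m₁ + m₂ * Real.sin t ^ 2)) (by fun_prop) 3 z _ hv0 hv1
  constructor
  · rw [hX20, h2.1, proj_fderiv_apply _ _ _ hX₁ 0,
      show (fun z => X₁pend m₁ m₂ r₁ r₂ g z 0)
          = (fun z : Fin 4 → ℝ => Δpend m₁ m₂ r₁ r₂ z * z 2) from
        funext fun z => by simp [X₁pend], hB0]
    simp [X₂pend]
  · rw [hX21, h2.2, proj_fderiv_apply _ _ _ hX₁ 1,
      show (fun z => X₁pend m₁ m₂ r₁ r₂ g z 1)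
          = (fun z : Fin 4 → ℝ => Δpend m₁ m₂ r₁ r₂ z * z 3) from
        funext fun z => by simp [X₁pend], hB1]
    simp [X₂pend]

end Aux

/-- The first two components of `X₄ = [X₂, X₃]` vanish identically. -/
theorem X₄_first_components_vanish
    (m₁ m₂ r₁ r₂ g : ℝ) (hm₁ : 0 < m₁) (hm₂ : 0 < m₂)
    (hr₁ : 0 < r₁) (hr₂ : 0 < r₂) (hg : 0 < g) :
    ∀ z : Fin 4 → ℝ,
      X₄pend m₁ m₂ r₁ r₂ g z 0 = 0 ∧ X₄pend m₁ m₂ r₁ r₂ g z 1 = 0 := by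
  intro z
  obtain ⟨h0, h1⟩ := fderiv_X₂_zero m₁ m₂ r₁ r₂ z (X₃pend m₁ m₂ r₁ r₂ g z)
  have hv0 : X₂pend m₁ m₂ r₁ r₂ z 0 = 0 := by simp [X₂pend]
  have hv1 : X₂pend m₁ m₂ r₁ r₂ z 1 = 0 := by simp [X₂pend]
  have hE0 : X₄pend m₁ m₂ r₁ r₂ g z 0 =
      fderiv ℝ (X₃pend m₁ m₂ r₁ r₂ g) z (X₂pend m₁ m₂ r₁ r₂ z) 0
        - fderiv ℝ (X₂pend m₁ m₂ r₁ r₂) z (X₃pend m₁ m₂ r₁ r₂ g z) 0 := rfl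
  have hE1 : X₄pend m₁ m₂ r₁ r₂ g z 1 =
      fderiv ℝ (X₃pend m₁ m₂ r₁ r₂ g) z (X₂pend m₁ m₂ r₁ r₂ z) 1
        - fderiv ℝ (X₂pend m₁ m₂ r₁ r₂) z (X₃pend m₁ m₂ r₁ r₂ g z) 1 := rfl
  by_cases hd : DifferentiableAt ℝ (X₃pend m₁ m₂ r₁ r₂ g) z
  · have hc0 : fderiv ℝ (fun z => X₃pend m₁ m₂ r₁ r₂ g z 0) z
        (X₂pend m₁ m₂ r₁ r₂ z) = 0 := by
      rw [show (fun z => X₃pend m₁ m₂ r₁ r₂ g z 0)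
          = (fun z : Fin 4 → ℝ => -(Δpend m₁ m₂ r₁ r₂ z * b₁pend m₁ m₂ r₁ r₂ z)) from
        funext fun z => (X₃_comp m₁ m₂ r₁ r₂ g z).1]
      exact key_fderiv
        (fun t => -(r₁ * r₂ * (m₁ + m₂ * Real.sin t ^ 2)
          * (m₂ * r₂ * (r₁ * m₂ * Real.cos t - r₂ * m₁)))) (by fun_prop) z _ hv0 hv1
    have hc1 : fderiv ℝ (fun z => X₃pend m₁ m₂ r₁ r₂ g z 1) z
        (X₂pend m₁ m₂ r₁ r₂ z) = 0 := by
      rw [show (fun z => X₃pend m₁ m₂ r₁ r₂ g z 1)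
          = (fun z : Fin 4 → ℝ => -(Δpend m₁ m₂ r₁ r₂ z * b₂pend m₁ m₂ r₁ r₂ z)) from
        funext fun z => (X₃_comp m₁ m₂ r₁ r₂ g z).2]
      exact key_fderiv
        (fun t => -(r₁ * r₂ * (m₁ + m₂ * Real.sin t ^ 2)
          * (m₂ * r₁ * (r₂ * m₁ * Real.cos t - r₁ * (m₁ + m₂))))) (by fun_prop) z _ hv0 hv1
    constructor
    · rw [hE0, h0, proj_fderiv_apply _ _ _ hd 0, hc0, sub_zero]
    · rw [hE1, h1, proj_fderiv_apply _ _ _ hd 1, hc1, sub_zero]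
  · rw [fderiv_zero_of_not_differentiableAt hd] at hE0 hE1
    constructor
    · rw [hE0, h0]; simp
    · rw [hE1, h1]; simp
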